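/- Let V be a Hilbert space with orthonormal vectors ρ₁,...,ρ_M ∈ V and linear functionals τ₁,...,τ_M ∈ V* such that the matrix A with entries A_{ij} = τᵢ(ρⱼ) is upper triangular with nonzero diagonal entries. Then for every v ∈ V there exists a unique coefficient vector σ ∈ ℝ^M solving τᵢ(Σⱼ σⱼρⱼ) = τᵢ(v) for all i = 1,...,M, and the EIM interpolant I(v) = Σⱼ σⱼρⱼ satisfies τᵢ(I(v)) = τᵢ(v) for all i; moreover I is a linear projection: I(I(v)) = I(v). -/
import Mathlib


open scoped BigOperators

/-- Well-posedness of the EIM linear system: with orthonormal basis functions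
`ρ₁,…,ρ_M`, functionals `τ₁,…,τ_M`, and a triangular interpolation matrix
`(τᵢ(ρⱼ))` with nonzero diagonal, every `v` admits a unique coefficient vector
`σ` with `τᵢ(Σⱼ σⱼρⱼ) = τᵢ(v)` for all `i`; the resulting interpolation
operator is idempotent (a projection). -/
theorem eim_well_posed (V : Type*) [NormedAddCommGroup V]
    [InnerProductSpace ℝ V] [CompleteSpace V] (M : ℕ)
    (ρ : Fin M → V) (hρ : Orthonormal ℝ ρ)
    (τ : Fin M → (V →L[ℝ] ℝ))
    (htri : ∀ i j : Fin M, i < j → τ i (ρ j) = 0)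
    (hdiag : ∀ i : Fin M, τ i (ρ i) ≠ 0) :
    (∀ v : V, ∃! σ : Fin M → ℝ, ∀ i, τ i (∑ j, σ j • ρ j) = τ i v) ∧
    (∀ (v : V) (σ σ' : Fin M → ℝ),
      (∀ i, τ i (∑ j, σ j • ρ j) = τ i v) →
      (∀ i, τ i (∑ j, σ' j • ρ j) = τ i (∑ j, σ j • ρ j)) →
      ∑ j, σ' j • ρ j = ∑ j, σ j • ρ j) := by
  set A : Matrix (Fin M) (Fin M) ℝ := fun i j => τ i (ρ j) with hA
  have hdet : IsUnit A.det := by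
    rw [Matrix.det_of_lowerTriangular A (fun i j h => htri i j h)]
    exact (Finset.prod_ne_zero_iff.2 fun i _ => hdiag i).isUnit
  have key : ∀ (σ : Fin M → ℝ) (i : Fin M),
      τ i (∑ j, σ j • ρ j) = A.mulVec σ i := by
    intro σ i
    simp [Matrix.mulVec, dotProduct, mul_comm, hA]
  have hinj : Function.Injective A.mulVec :=
    Matrix.mulVec_injective_iff_isUnit.2 ((Matrix.isUnit_iff_isUnit_det _).2 hdet)
  have huniq : ∀ v : V, ∃! σ : Fin M → ℝ,
      ∀ i, τ i (∑ j, σ j • ρ j) = τ i v := by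
    intro v
    refine ⟨A⁻¹.mulVec (fun i => τ i v), ?_, ?_⟩
    · intro i
      rw [key, Matrix.mulVec_mulVec, Matrix.mul_nonsing_inv _ hdet,
        Matrix.one_mulVec]
    · intro σ hσ
      apply hinj
      funext i
      rw [Matrix.mulVec_mulVec, Matrix.mul_nonsing_inv _ hdet,
        Matrix.one_mulVec, ← key, hσ i]
  refine ⟨huniq, fun v σ σ' hσ hσ' => ?_⟩
  have : σ' = σ := by
    apply hinj
    funext i
    rw [← key, ← key, hσ' i]
  rw [this]
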